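/- arXiv:1103.4278 — 3 statements merged into one kernel-verified Lean document; each statement's English description precedes it below -/
import Mathlib

section
/- Let f : R → A be a local homomorphism of commutative local rings with residue field κ = A/𝔪, let Ã = κ ⊗_R A, let M̃ be the kernel of the evaluation map Ã → κ, λ⊗a ↦ λ·a(x), and suppose the κ-linear map ϑ : 𝔪/𝔪² → M̃/M̃² induced by a ↦ 1⊗a is bijective. Then for every element v of the Zariski relative tangent space T^Zar (a κ-linear map v : 𝔪/𝔪² → κ vanishing on the image of 𝔪_R/𝔪_R²), the map D_v : A → κ defined by D_v(a) = v(ϑ⁻¹[1⊗a − a(x)⊗1]) is an R-linear derivation from A to κ. -/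
open IsLocalRing TensorProduct

section RelTangent

variable (R A : Type*) [CommRing R] [CommRing A] [IsLocalRing R] [IsLocalRing A]
  [Algebra R A] [IsLocalHom (algebraMap R A)]

/-- The image in `𝔪_A` of an element of `𝔪_R` under the local homomorphism `R → A`. -/
def mapMax (r : maximalIdeal R) : maximalIdeal A :=
  ⟨algebraMap R A r, by
    rw [IsLocalRing.mem_maximalIdeal, mem_nonunits_iff]
    exact fun h => mem_nonunits_iff.mp ((IsLocalRing.mem_maximalIdeal _).mp r.2)
      (IsLocalHom.map_nonunit _ h)⟩

/-- The class in `𝔪_A/𝔪_A²` of the image of an element of `𝔪_R`; the map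
`j : 𝔪_R/𝔪_R² → 𝔪_A/𝔪_A²` induced by `R → A` sends the class of `r` to `jClass R A r`. -/
noncomputable def jClass (r : maximalIdeal R) : (maximalIdeal A).Cotangent :=
  (maximalIdeal A).toCotangent (mapMax R A r)

/-- The Zariski relative tangent space: the space of `κ`-linear forms on `𝔪_A/𝔪_A²`
vanishing on the image of `j : 𝔪_R/𝔪_R² → 𝔪_A/𝔪_A²`. -/
noncomputable def TZar : Submodule (ResidueField A)
    ((maximalIdeal A).Cotangent →ₗ[ResidueField A] ResidueField A) :=
  ⨅ r : maximalIdeal R, LinearMap.ker (LinearMap.applyₗ (jClass R A r))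

instance : IsScalarTower R A (ResidueField A) :=
  IsScalarTower.of_algebraMap_eq fun x =>
    (IsLocalRing.ResidueField.map_residue (algebraMap R A) x).symm

/-- The evaluation map `Ã = κ ⊗_R A → κ`, `λ ⊗ a ↦ λ·a(x)`. -/
noncomputable def ev : (ResidueField A ⊗[R] A) →ₐ[ResidueField A] ResidueField A :=
  Algebra.TensorProduct.lift (AlgHom.id _ _) (IsScalarTower.toAlgHom R A (ResidueField A))
    fun _ _ => Commute.all _ _

/-- The ideal `M̃ = ker(ev) ⊆ Ã`. -/
noncomputable def Mker : Ideal (ResidueField A ⊗[R] A) := RingHom.ker (ev R A)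

/-- For `m ∈ 𝔪`, the element `1 ⊗ m` of `M̃`. -/
noncomputable def oneTmul (m : maximalIdeal A) : Mker R A :=
  ⟨(1 : ResidueField A) ⊗ₜ[R] (m : A), by
    simp only [Mker, RingHom.mem_ker, ev, Algebra.TensorProduct.lift_tmul, map_one, one_mul,
      AlgHom.coe_id, id_eq, IsScalarTower.coe_toAlgHom', ResidueField.algebraMap_eq]
    exact Ideal.Quotient.eq_zero_iff_mem.mpr m.2⟩

/-- For `a : A`, the element `1 ⊗ a − a(x) ⊗ 1` of `M̃`. -/
noncomputable def gen (a : A) : Mker R A :=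
  ⟨(1 : ResidueField A) ⊗ₜ[R] a - residue A a ⊗ₜ[R] (1 : A), by
    simp [Mker, RingHom.mem_ker, ev, Algebra.TensorProduct.lift_tmul]⟩

end RelTangent

section Aux

variable (R A : Type*) [CommRing R] [CommRing A] [IsLocalRing R] [IsLocalRing A]
  [Algebra R A] [IsLocalHom (algebraMap R A)]

lemma gen_coe (a : A) : ((gen R A a : Mker R A) : ResidueField A ⊗[R] A)
    = (1 : ResidueField A) ⊗ₜ[R] a - residue A a ⊗ₜ[R] (1 : A) := rfl

lemma residue_algebraMap (r : R) :
    residue A (algebraMap R A r) = algebraMap R (ResidueField A) r := by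
  rw [IsScalarTower.algebraMap_apply R A (ResidueField A), ResidueField.algebraMap_eq]

lemma gen_add (a b : A) : gen R A (a + b) = gen R A a + gen R A b := by
  apply Subtype.ext
  show _ = ((gen R A a : Mker R A) : ResidueField A ⊗[R] A) + ((gen R A b : Mker R A) : _)
  simp only [gen_coe, map_add, TensorProduct.tmul_add, TensorProduct.add_tmul]
  abel

lemma gen_smul (r : R) (a : A) :
    gen R A (r • a) = (algebraMap R (ResidueField A) r) • gen R A a := by
  apply Subtype.ext
  show _ = (algebraMap R (ResidueField A) r) • ((gen R A a : Mker R A) : ResidueField A ⊗[R] A)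
  rw [gen_coe, gen_coe, smul_sub, TensorProduct.smul_tmul', TensorProduct.smul_tmul',
    smul_eq_mul, smul_eq_mul, mul_one]
  congr 1
  · rw [← TensorProduct.smul_tmul, Algebra.algebraMap_eq_smul_one]
  · rw [Algebra.smul_def, map_mul, residue_algebraMap]

lemma gen_one : gen R A 1 = 0 := by
  apply Subtype.ext
  show (1 : ResidueField A) ⊗ₜ[R] (1 : A) - residue A 1 ⊗ₜ[R] (1 : A) = 0
  rw [map_one, sub_self]

lemma toCotangent_smul (c : ResidueField A) (x : Mker R A) :
    (Mker R A).toCotangent (c • x) = c • (Mker R A).toCotangent x := by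
  rw [algebra_compatible_smul (ResidueField A ⊗[R] A) c x, map_smul, algebraMap_smul]

lemma gen_cot_mul (a b : A) :
    (Mker R A).toCotangent (gen R A (a * b)) =
      residue A a • (Mker R A).toCotangent (gen R A b)
        + residue A b • (Mker R A).toCotangent (gen R A a) := by
  have hmem : ((gen R A a : Mker R A) : ResidueField A ⊗[R] A) * (gen R A b : Mker R A)
      ∈ (Mker R A) ^ 2 := by
    rw [pow_two]; exact Ideal.mul_mem_mul (gen R A a).2 (gen R A b).2
  have h1 : gen R A (a * b) = residue A a • gen R A b + residue A b • gen R A a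
      + ⟨_, Ideal.pow_le_self two_ne_zero hmem⟩ := by
    apply Subtype.ext
    show _ = residue A a • ((gen R A b : Mker R A) : ResidueField A ⊗[R] A)
      + residue A b • ((gen R A a : Mker R A) : ResidueField A ⊗[R] A)
      + ((gen R A a : Mker R A) : ResidueField A ⊗[R] A) * (gen R A b : Mker R A)
    simp only [gen_coe, map_mul, smul_sub, TensorProduct.smul_tmul', smul_eq_mul, mul_one,
      sub_mul, mul_sub, Algebra.TensorProduct.tmul_mul_tmul, one_mul,
      mul_comm (residue A b) (residue A a)]
    abel
  rw [h1, map_add, map_add, toCotangent_smul, toCotangent_smul,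
    (Ideal.toCotangent_eq_zero (Mker R A) ⟨_, Ideal.pow_le_self two_ne_zero hmem⟩).mpr hmem, add_zero]

lemma residue_smul (a : A) (c : ResidueField A) : a • c = residue A a * c := by
  rw [algebra_compatible_smul (ResidueField A) a c, ResidueField.algebraMap_eq, smul_eq_mul]

end Aux

/-- Let `f : R → A` be a local homomorphism of commutative local rings with
residue field `κ`, `Ã = κ ⊗_R A`, `M̃` the kernel of the evaluation map `Ã → κ`, and suppose
the `κ`-linear map `ϑ : 𝔪/𝔪² → M̃/M̃²` induced by `a ↦ 1 ⊗ a` is bijective.  Then for every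
element `v` of the Zariski relative tangent space `T^Zar`, the map `D_v : A → κ` defined by
`D_v(a) = v(ϑ⁻¹[1⊗a − a(x)⊗1])` is an `R`-linear derivation from `A` to `κ`. -/
theorem stmt_6 (R A : Type*) [CommRing R] [CommRing A] [IsLocalRing R] [IsLocalRing A]
    [Algebra R A] [IsLocalHom (algebraMap R A)]
    (ϑ : (maximalIdeal A).Cotangent →ₗ[ResidueField A] (Mker R A).Cotangent)
    (hϑ : ∀ m : maximalIdeal A,
      ϑ ((maximalIdeal A).toCotangent m) = (Mker R A).toCotangent (oneTmul R A m))
    (hbij : Function.Bijective ϑ)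
    (v : TZar R A) :
    ∃ D : Derivation R A (ResidueField A), ∀ a : A,
      D a = (v : (maximalIdeal A).Cotangent →ₗ[ResidueField A] ResidueField A)
        ((LinearEquiv.ofBijective ϑ hbij).symm ((Mker R A).toCotangent (gen R A a))) := by
  classical
  set e := (LinearEquiv.ofBijective ϑ hbij).symm
  set F : A → ResidueField A := fun a =>
    (v : (maximalIdeal A).Cotangent →ₗ[ResidueField A] ResidueField A)
      (e ((Mker R A).toCotangent (gen R A a))) with hF
  have hadd : ∀ a b, F (a + b) = F a + F b := fun a b => by
    simp only [hF, gen_add, map_add]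
  have hsmul : ∀ (c : ResidueField A) (x : Mker R A),
      (v : (maximalIdeal A).Cotangent →ₗ[ResidueField A] ResidueField A)
        (e ((Mker R A).toCotangent (c • x)))
      = c * (v : (maximalIdeal A).Cotangent →ₗ[ResidueField A] ResidueField A)
        (e ((Mker R A).toCotangent x)) := fun c x => by
    rw [toCotangent_smul, map_smul, map_smul, smul_eq_mul]
  refine ⟨⟨⟨⟨F, fun a b => hadd a b⟩, fun r a => ?_⟩, ?_, fun a b => ?_⟩, fun a => rfl⟩
  · show F (r • a) = r • F a
    rw [hF]
    simp only [gen_smul]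
    rw [hsmul, ← algebraMap_smul (ResidueField A) r
      ((v : (maximalIdeal A).Cotangent →ₗ[ResidueField A] ResidueField A)
        (e ((Mker R A).toCotangent (gen R A a)))), smul_eq_mul]
  · show F 1 = 0
    simp only [hF, gen_one, map_zero]
  · show F (a * b) = a • F b + b • F a
    rw [hF]
    simp only [gen_cot_mul, map_add]
    simp only [map_smul, smul_eq_mul, residue_smul]
end

section
/- Let k be a field and (A, 𝔪) a local k-algebra whose residue field K = A/𝔪 is an algebraic and separable extension of k. Then the canonical K-linear map Φ : Der_k(A, K) → Hom_K(𝔪/𝔪², K), sending a k-linear derivation D : A → K to the map it induces on 𝔪/𝔪², is bijective; i.e. the Grothendieck tangent space coincides with the Zariski tangent space of A. -/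
open IsLocalRing


universe u v

section AuxA

variable {k A : Type*} [Field k] [CommRing A] [IsLocalRing A] [Algebra k A]

theorem resid_surj : Function.Surjective (algebraMap A (ResidueField A)) :=
  Ideal.Quotient.mk_surjective

noncomputable def phiAux0 (D : Derivation k A (ResidueField A)) :
    (maximalIdeal A).Cotangent →ₗ[A] ResidueField A :=
  Submodule.liftQ _
    { toFun := fun m => D (m : A)
      map_add' := fun x y => by simp
      map_smul' := fun a x => by
        simp [Derivation.leibniz, Algebra.smul_def,
          Ideal.Quotient.eq_zero_iff_mem.2 x.2] }
    (by
      intro x hx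
      refine Submodule.smul_induction_on hx ?_ ?_
      · intro a ha m _
        simp only [LinearMap.mem_ker, LinearMap.coe_mk, AddHom.coe_mk, SetLike.val_smul,
          smul_eq_mul, Derivation.leibniz, Algebra.smul_def,
          Ideal.Quotient.eq_zero_iff_mem.2 ha, Ideal.Quotient.eq_zero_iff_mem.2 m.2]
        have h1 : algebraMap A (ResidueField A) a = 0 := Ideal.Quotient.eq_zero_iff_mem.2 ha
        have h2 : algebraMap A (ResidueField A) ↑m = 0 := Ideal.Quotient.eq_zero_iff_mem.2 m.2
        rw [h1, h2, zero_mul, zero_mul, add_zero]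
      · intro x y hx hy
        simp only [LinearMap.mem_ker, map_add] at hx hy ⊢
        rw [hx, hy, add_zero])

noncomputable def phiAux (D : Derivation k A (ResidueField A)) :
    (maximalIdeal A).Cotangent →ₗ[ResidueField A] ResidueField A :=
  LinearMap.extendScalarsOfSurjective resid_surj (phiAux0 D)

@[simp] theorem phiAux_toCotangent (D : Derivation k A (ResidueField A))
    (m : maximalIdeal A) :
    phiAux D ((maximalIdeal A).toCotangent m) = D m := rfl

end AuxA

section AuxB

variable (k : Type u) (A : Type v) [Field k] [CommRing A] [IsLocalRing A] [Algebra k A]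

theorem quotCot_mk' (a : A) :
    (Ideal.quotCotangent (maximalIdeal A)) (Ideal.Quotient.mk _
      (Ideal.Quotient.mk _ a)) = residue A a := rfl

theorem halg (c : k) :
    algebraMap k (ResidueField A) c = residue A (algebraMap k A c) := rfl

theorem exists_sigma [Algebra.IsSeparable k (ResidueField A)] :
    ∃ σ : ResidueField A →+* (A ⧸ (maximalIdeal A ^ 2)),
      (∀ α, Ideal.Quotient.mk (maximalIdeal A).cotangentIdeal (σ α) =
        (Ideal.quotCotangent (maximalIdeal A)).symm α) ∧
      (∀ c : k, σ (algebraMap k (ResidueField A) c) =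
        Ideal.Quotient.mk (maximalIdeal A ^ 2) (algebraMap k A c)) := by
  classical
  set K := ResidueField A
  set B := A ⧸ (maximalIdeal A ^ 2) with hBdef
  set J : Ideal B := (maximalIdeal A).cotangentIdeal with hJdef
  set eBK := Ideal.quotCotangent (maximalIdeal A)
  -- ULift world
  let khat := ULift.{v} k
  let Khat := ULift.{u} K
  let Bhat := ULift.{u} B
  let upK : K ≃+* Khat := ULift.ringEquiv.symm
  let upB : B ≃+* Bhat := ULift.ringEquiv.symm
  let dk : khat ≃+* k := ULift.ringEquiv
  letI : Algebra khat Khat :=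
    ((upK.toRingHom.comp (algebraMap k K)).comp dk.toRingHom).toAlgebra
  letI : Algebra khat Bhat :=
    ((upB.toRingHom.comp ((Ideal.Quotient.mk (maximalIdeal A ^ 2)).comp
      (algebraMap k A))).comp dk.toRingHom).toAlgebra
  haveI : Algebra.IsSeparable khat Khat :=
    Algebra.IsSeparable.of_equiv_equiv (A₁ := k) (B₁ := K) (A₂ := khat) (B₂ := Khat)
      dk.symm upK rfl
  haveI := Algebra.FormallyEtale.of_isSeparable khat Khat
  -- the lifted ideal
  let Jhat : Ideal Bhat := J.map (upB : B →+* Bhat)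
  have hmemJhat : ∀ x : Bhat, x ∈ Jhat ↔ x.down ∈ J := by
    intro x
    constructor
    · intro hx
      obtain ⟨y, hy, e⟩ := (Ideal.mem_map_iff_of_surjective _ upB.surjective).1 hx
      have : x.down = y := by rw [← e]; rfl
      rwa [this]
    · intro h
      exact Ideal.mem_map_of_mem (upB : B →+* Bhat) h
  have hJhat : Jhat ^ 2 = ⊥ := by
    refine eq_bot_iff.mpr (le_trans (le_of_eq (pow_two Jhat)) ?_)
    refine Ideal.mul_le.2 fun x hx y hy => ?_
    rw [Ideal.mem_bot]
    have hJJ : J * J = ⊥ := by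
      rw [← pow_two]; exact Ideal.cotangentIdeal_square _
    have hd : (x * y).down ∈ J * J :=
      Ideal.mul_mem_mul ((hmemJhat x).1 hx) ((hmemJhat y).1 hy)
    rw [hJJ, Ideal.mem_bot] at hd
    exact upB.symm.injective (hd.trans (map_zero _).symm)
  -- the map to lift
  let qe : (B ⧸ J) ≃+* (Bhat ⧸ Jhat) := Ideal.quotientEquiv J Jhat upB rfl
  have hsymm : ∀ c : k, eBK.symm (algebraMap k K c) =
      Ideal.Quotient.mk J (Ideal.Quotient.mk _ (algebraMap k A c)) := by
    intro c
    apply eBK.injective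
    refine (eBK.apply_symm_apply _).trans ?_
    exact (quotCot_mk' A _).symm
  let g : Khat →ₐ[khat] (Bhat ⧸ Jhat) :=
    { toRingHom := (qe.toRingHom.comp (eBK.symm.toRingHom)).comp
        (upK.symm.toRingHom)
      commutes' := by
        intro c
        show qe (eBK.symm (algebraMap k K (dk c))) = _
        rw [hsymm, Ideal.quotientEquiv_mk]
        rfl }
  obtain ⟨σhat, hσhat⟩ :=
    Algebra.FormallySmooth.comp_surjective (R := khat) (A := Khat) Jhat hJhat g
  refine ⟨(upB.symm.toRingHom.comp σhat.toRingHom).comp upK.toRingHom, ?_, ?_⟩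
  · intro α
    have h1 : Ideal.Quotient.mk Jhat (σhat (upK α)) = g (upK α) := by
      rw [← hσhat]; rfl
    have h2 : g (upK α) = qe (eBK.symm α) := by
      show qe (eBK.symm (upK.symm (upK α))) = _
      rw [RingEquiv.symm_apply_apply]
    have h3 : qe (Ideal.Quotient.mk J (upB.symm (σhat (upK α)))) =
        Ideal.Quotient.mk Jhat (σhat (upK α)) := by
      rw [Ideal.quotientEquiv_mk, upB.apply_symm_apply]
    show Ideal.Quotient.mk J (upB.symm (σhat (upK α))) = eBK.symm α
    apply qe.injective
    rw [h3, h1, h2]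
  · intro c
    have := σhat.commutes (dk.symm c)
    have h4 : σhat (upK (algebraMap k K c)) =
        upB (Ideal.Quotient.mk _ (algebraMap k A c)) := this
    show upB.symm (σhat (upK (algebraMap k K c))) = _
    rw [h4, RingEquiv.symm_apply_apply]

variable (k : Type u) (A : Type v) [Field k] [CommRing A] [IsLocalRing A] [Algebra k A]


theorem sigma_D_zero [Algebra.IsSeparable k (ResidueField A)]
    (σ : ResidueField A →+* (A ⧸ (maximalIdeal A ^ 2)))
    (hσJ : ∀ α, Ideal.Quotient.mk (maximalIdeal A).cotangentIdeal (σ α) =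
      (Ideal.quotCotangent (maximalIdeal A)).symm α)
    (hσk : ∀ c : k, σ (algebraMap k (ResidueField A) c) =
      Ideal.Quotient.mk (maximalIdeal A ^ 2) (algebraMap k A c))
    (D : Derivation k A (ResidueField A)) (t : A) (α : ResidueField A)
    (ht : Ideal.Quotient.mk (maximalIdeal A ^ 2) t = σ α) : D t = 0 := by
  classical
  -- basic facts about D and σ
  have hres : ∀ (β : ResidueField A) (x : A), Ideal.Quotient.mk (maximalIdeal A ^ 2) x = σ β →
      residue A x = β := by
    intro β x hx
    have h1 := quotCot_mk' A x
    rw [hx, hσJ] at h1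
    exact h1.symm.trans ((maximalIdeal A).quotCotangent.apply_symm_apply β)
  have hD2 : ∀ x ∈ maximalIdeal A ^ 2, D x = 0 := by
    intro x hx
    rw [pow_two] at hx
    refine Submodule.mul_induction_on hx ?_ ?_
    · intro m hm n hn
      have h1 : algebraMap A (ResidueField A) m = 0 := Ideal.Quotient.eq_zero_iff_mem.2 hm
      have h2 : algebraMap A (ResidueField A) n = 0 := Ideal.Quotient.eq_zero_iff_mem.2 hn
      rw [Derivation.leibniz, Algebra.smul_def, Algebra.smul_def, h1, h2, zero_mul,
        zero_mul, add_zero]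
    · intro x y hx hy
      rw [map_add, hx, hy, add_zero]
  have hDc : ∀ x y : A, Ideal.Quotient.mk (maximalIdeal A ^ 2) x =
      Ideal.Quotient.mk (maximalIdeal A ^ 2) y → D x = D y := by
    intro x y hxy
    have h1 : x - y ∈ maximalIdeal A ^ 2 := Ideal.Quotient.eq.1 hxy
    have h2 := hD2 _ h1
    rw [map_sub, sub_eq_zero] at h2
    exact h2
  have hDk : ∀ c : k, D (algebraMap k A c) = 0 := by
    intro c
    rw [Algebra.algebraMap_eq_smul_one, Derivation.map_smul, Derivation.map_one_eq_zero,
      smul_zero]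
  -- choice of lifts
  let s : (A ⧸ (maximalIdeal A ^ 2)) → A := fun b => (Ideal.Quotient.mk_surjective b).choose
  have hs : ∀ b, Ideal.Quotient.mk (maximalIdeal A ^ 2) (s b) = b :=
    fun b => (Ideal.Quotient.mk_surjective b).choose_spec
  -- ULift world
  let khat := ULift.{v} k
  let Khat := ULift.{u} (ResidueField A)
  let upK : ResidueField A ≃+* Khat := ULift.ringEquiv.symm
  let dk : khat ≃+* k := ULift.ringEquiv
  letI : Algebra khat Khat :=
    ((upK.toRingHom.comp (algebraMap k (ResidueField A))).comp dk.toRingHom).toAlgebra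
  letI : SMul khat Khat := Algebra.toSMul
  letI : Module khat Khat := Algebra.toModule
  haveI : Algebra.IsSeparable khat Khat :=
    Algebra.IsSeparable.of_equiv_equiv (A₁ := k) (B₁ := ResidueField A) (A₂ := khat) (B₂ := Khat)
      dk.symm upK rfl
  haveI := Algebra.FormallyEtale.of_isSeparable khat Khat
  -- the induced derivation on Khat
  let E : Derivation khat Khat Khat :=
  { toFun := fun a => upK (D (s (σ a.down)))
    map_add' := by
      intro a b
      have h1 : D (s (σ ((a + b).down))) = D (s (σ a.down) + s (σ b.down)) :=
        hDc _ _ (by rw [hs, map_add, hs, hs, ← map_add]; rfl)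
      show upK (D (s (σ ((a + b).down)))) = upK (D (s (σ a.down))) + upK (D (s (σ b.down)))
      rw [h1, map_add, map_add]
    map_smul' := by
      intro c a
      have h1 : Ideal.Quotient.mk (maximalIdeal A ^ 2)
          (algebraMap k A c.down * s (σ a.down)) = σ ((c • a).down) := by
        rw [map_mul, hs, ← hσk, ← map_mul]
        rfl
      have h2 : D (s (σ ((c • a).down))) = D (algebraMap k A c.down * s (σ a.down)) :=
        hDc _ _ (by rw [hs, h1])
      show upK (D (s (σ ((c • a).down)))) = c • upK (D (s (σ a.down)))
      rw [h2, D.leibniz, hDk, smul_zero, add_zero]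
      refine ULift.down_injective ?_
      show algebraMap k A c.down • D (s (σ a.down)) =
        algebraMap k (ResidueField A) c.down * D (s (σ a.down))
      rw [Algebra.smul_def]
      rfl
    map_one_eq_zero' := by
      have h1 : D (s (σ ((1 : Khat).down))) = D 1 :=
        hDc _ _ (by rw [hs, ULift.one_down, map_one, map_one])
      show upK (D (s (σ ((1 : Khat).down)))) = 0
      rw [h1, Derivation.map_one_eq_zero, map_zero]
    leibniz' := by
      intro a b
      have h1 : D (s (σ ((a * b).down))) = D (s (σ a.down) * s (σ b.down)) :=
        hDc _ _ (by rw [hs, map_mul, hs, hs, ← map_mul]; rfl)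
      show upK (D (s (σ ((a * b).down)))) =
        a • upK (D (s (σ b.down))) + b • upK (D (s (σ a.down)))
      rw [h1, D.leibniz]
      refine ULift.down_injective ?_
      show s (σ a.down) • D (s (σ b.down)) + s (σ b.down) • D (s (σ a.down)) =
        a.down * D (s (σ b.down)) + b.down * D (s (σ a.down))
      rw [Algebra.smul_def, Algebra.smul_def]
      have e1 : algebraMap A (ResidueField A) (s (σ a.down)) = a.down := hres _ _ (hs _)
      have e2 : algebraMap A (ResidueField A) (s (σ b.down)) = b.down := hres _ _ (hs _)
      rw [e1, e2] }
  have hE : ∀ x : Khat, E x = 0 := by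
    intro x
    have h5 : E x = E.liftKaehlerDifferential ((KaehlerDifferential.D khat Khat) x) :=
      (E.liftKaehlerDifferential_comp_D x).symm
    rw [h5, Subsingleton.elim ((KaehlerDifferential.D khat Khat) x) 0, map_zero]
  have h6 : D t = D (s (σ α)) := hDc _ _ (by rw [hs, ht])
  have h7 := hE (upK α)
  have h8 : E (upK α) = upK (D (s (σ α))) := rfl
  rw [h8] at h7
  rw [h6]
  exact upK.injective (by rw [h7, map_zero])

end AuxB

/-- Let `k` be a field and `(A, 𝔪)` a local `k`-algebra whose residue field
`K = A/𝔪` is an algebraic and separable extension of `k`.  Then the canonical `K`-linear map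
`Φ : Der_k(A, K) → Hom_K(𝔪/𝔪², K)`, sending a `k`-linear derivation `D : A → K` to the map it
induces on `𝔪/𝔪²`, is bijective; i.e. the Grothendieck tangent space coincides with the
Zariski tangent space of `A`. -/
theorem stmt_12 (k A : Type*) [Field k] [CommRing A] [IsLocalRing A] [Algebra k A]
    [Algebra.IsAlgebraic k (ResidueField A)] [Algebra.IsSeparable k (ResidueField A)] :
    ∃ Φ : Derivation k A (ResidueField A) →ₗ[ResidueField A]
        ((maximalIdeal A).Cotangent →ₗ[ResidueField A] ResidueField A),
      (∀ (D : Derivation k A (ResidueField A)) (m : maximalIdeal A),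
        Φ D ((maximalIdeal A).toCotangent m) = D m) ∧
      Function.Bijective Φ := by

  classical
  obtain ⟨σ, hσJ, hσk⟩ := exists_sigma k A
  let s : (A ⧸ (maximalIdeal A ^ 2)) → A := fun b => (Ideal.Quotient.mk_surjective b).choose
  have hs : ∀ b, Ideal.Quotient.mk (maximalIdeal A ^ 2) (s b) = b :=
    fun b => (Ideal.Quotient.mk_surjective b).choose_spec
  have hmem : ∀ a : A, Ideal.Quotient.mk (maximalIdeal A ^ 2) a - σ (residue A a) ∈
      (maximalIdeal A).cotangentIdeal := by
    intro a
    have h1 : Ideal.Quotient.mk (maximalIdeal A).cotangentIdeal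
        (Ideal.Quotient.mk (maximalIdeal A ^ 2) a - σ (residue A a)) = 0 := by
      rw [map_sub, hσJ, sub_eq_zero]
      apply ((maximalIdeal A).quotCotangent).injective
      refine Eq.trans ?_ ((maximalIdeal A).quotCotangent.apply_symm_apply _).symm
      exact quotCot_mk' A a
    exact Ideal.Quotient.eq_zero_iff_mem.1 h1
  let Ψ : A → (maximalIdeal A).Cotangent := fun a =>
    (maximalIdeal A).cotangentEquivIdeal.symm ⟨_, hmem a⟩
  have hψ : ∀ (a t : A), Ideal.Quotient.mk (maximalIdeal A ^ 2) t = σ (residue A a) →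
      ∀ hat : a - t ∈ maximalIdeal A,
      Ψ a = (maximalIdeal A).toCotangent ⟨a - t, hat⟩ := by
    intro a t ht hat
    have hmem2 : (maximalIdeal A ^ 2).mkQ (a - t) ∈ (maximalIdeal A).cotangentIdeal := by
      exact ⟨a - t, hat, rfl⟩
    have harg : (⟨_, hmem a⟩ : (maximalIdeal A).cotangentIdeal) =
        ⟨(maximalIdeal A ^ 2).mkQ (a - t), hmem2⟩ := by
      refine Subtype.ext ?_
      show Ideal.Quotient.mk (maximalIdeal A ^ 2) a - σ (residue A a) =
        (maximalIdeal A ^ 2).mkQ (a - t)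
      rw [show ((maximalIdeal A ^ 2).mkQ (a - t) : A ⧸ (maximalIdeal A ^ 2)) =
        Ideal.Quotient.mk (maximalIdeal A ^ 2) (a - t) from rfl, map_sub, ht]
    show (maximalIdeal A).cotangentEquivIdeal.symm ⟨_, hmem a⟩ = _
    rw [harg, Ideal.cotangentEquivIdeal_symm_apply]
  have key : ∀ (D : Derivation k A (ResidueField A)) (a : A),
      D a = phiAux D (Ψ a) := by
    intro D a
    have ht : Ideal.Quotient.mk (maximalIdeal A ^ 2) (s (σ (residue A a))) =
        σ (residue A a) := hs _
    have h1 : residue A (s (σ (residue A a))) = residue A a := by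
      have h2 := quotCot_mk' A (s (σ (residue A a)))
      rw [ht, hσJ] at h2
      exact h2.symm.trans ((maximalIdeal A).quotCotangent.apply_symm_apply _)
    have hat : a - s (σ (residue A a)) ∈ maximalIdeal A := by
      have h3 : residue A (a - s (σ (residue A a))) = 0 := by
        rw [map_sub, h1, sub_self]
      exact Ideal.Quotient.eq_zero_iff_mem.1 h3
    have hzero : D (s (σ (residue A a))) = 0 := sigma_D_zero k A σ hσJ hσk D _ _ ht
    rw [hψ a _ ht hat, phiAux_toCotangent]
    show D a = D (a - s (σ (residue A a)))
    rw [map_sub, hzero, sub_zero]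
  have hJJ : (maximalIdeal A).cotangentIdeal * (maximalIdeal A).cotangentIdeal = ⊥ := by
    rw [← pow_two]; exact Ideal.cotangentIdeal_square _
  -- the three Ψ identities
  have hψadd : ∀ a b : A, Ψ (a + b) = Ψ a + Ψ b := by
    intro a b
    have harg : (⟨_, hmem (a + b)⟩ : (maximalIdeal A).cotangentIdeal) =
        ⟨_, hmem a⟩ + ⟨_, hmem b⟩ := by
      refine Subtype.ext ?_
      show Ideal.Quotient.mk (maximalIdeal A ^ 2) (a + b) - σ (residue A (a + b)) =
        (Ideal.Quotient.mk (maximalIdeal A ^ 2) a - σ (residue A a)) +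
        (Ideal.Quotient.mk (maximalIdeal A ^ 2) b - σ (residue A b))
      rw [map_add, map_add, map_add]
      ring
    show (maximalIdeal A).cotangentEquivIdeal.symm _ = _
    rw [harg, map_add]
  have hψsmul : ∀ (c : k) (a : A), Ψ (c • a) = algebraMap k A c • Ψ a := by
    intro c a
    have harg : (⟨_, hmem (c • a)⟩ : (maximalIdeal A).cotangentIdeal) =
        algebraMap k A c • ⟨_, hmem a⟩ := by
      refine Subtype.ext ?_
      show Ideal.Quotient.mk (maximalIdeal A ^ 2) (c • a) - σ (residue A (c • a)) =
        algebraMap k A c • (Ideal.Quotient.mk (maximalIdeal A ^ 2) a - σ (residue A a))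
      rw [Algebra.smul_def (algebraMap k A c), Ideal.Quotient.algebraMap_eq]
      rw [Algebra.smul_def c a, map_mul, map_mul, map_mul]
      rw [show residue A (algebraMap k A c) = algebraMap k (ResidueField A) c from rfl, hσk]
      ring
    show (maximalIdeal A).cotangentEquivIdeal.symm _ = _
    rw [harg, map_smul]
  have hψmul : ∀ a b : A, Ψ (a * b) = a • Ψ b + b • Ψ a := by
    intro a b
    have huv : (Ideal.Quotient.mk (maximalIdeal A ^ 2) a - σ (residue A a)) *
        (Ideal.Quotient.mk (maximalIdeal A ^ 2) b - σ (residue A b)) = 0 := by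
      have h1 := Ideal.mul_mem_mul (hmem a) (hmem b)
      rw [hJJ, Ideal.mem_bot] at h1
      exact h1
    have harg : (⟨_, hmem (a * b)⟩ : (maximalIdeal A).cotangentIdeal) =
        a • ⟨_, hmem b⟩ + b • ⟨_, hmem a⟩ := by
      refine Subtype.ext ?_
      show Ideal.Quotient.mk (maximalIdeal A ^ 2) (a * b) - σ (residue A (a * b)) =
        a • (Ideal.Quotient.mk (maximalIdeal A ^ 2) b - σ (residue A b)) +
        b • (Ideal.Quotient.mk (maximalIdeal A ^ 2) a - σ (residue A a))
      rw [Algebra.smul_def a, Algebra.smul_def b, Ideal.Quotient.algebraMap_eq]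
      rw [map_mul, map_mul, map_mul]
      linear_combination -huv
    show (maximalIdeal A).cotangentEquivIdeal.symm _ = _
    rw [harg, map_add, map_smul, map_smul]
  refine ⟨{ toFun := fun D => phiAux D, map_add' := ?_, map_smul' := ?_ }, ?_, ?_, ?_⟩
  · intro D₁ D₂
    apply LinearMap.ext; intro x
    obtain ⟨m, rfl⟩ := Ideal.toCotangent_surjective (maximalIdeal A) x
    show phiAux (D₁ + D₂) ((maximalIdeal A).toCotangent m) =
      phiAux D₁ ((maximalIdeal A).toCotangent m) + phiAux D₂ ((maximalIdeal A).toCotangent m)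
    rw [phiAux_toCotangent, phiAux_toCotangent, phiAux_toCotangent]
    rfl
  · intro c D
    apply LinearMap.ext; intro x
    obtain ⟨m, rfl⟩ := Ideal.toCotangent_surjective (maximalIdeal A) x
    show phiAux (c • D) ((maximalIdeal A).toCotangent m) =
      c • phiAux D ((maximalIdeal A).toCotangent m)
    rw [phiAux_toCotangent, phiAux_toCotangent]
    rfl
  · intro D m
    exact phiAux_toCotangent D m
  · -- injective
    intro D₁ D₂ h
    have h' : phiAux D₁ = phiAux D₂ := h
    ext a
    rw [show D₁ a = phiAux D₁ (Ψ a) from key D₁ a, h', ← key D₂ a]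
  · -- surjective
    intro φ
    let Dl : A →ₗ[k] ResidueField A :=
      { toFun := fun a => φ (Ψ a)
        map_add' := by
          intro a b
          show φ (Ψ (a + b)) = φ (Ψ a) + φ (Ψ b)
          rw [hψadd, map_add]
        map_smul' := by
          intro c a
          show φ (Ψ (c • a)) = c • φ (Ψ a)
          rw [hψsmul, ← algebraMap_smul (ResidueField A) (algebraMap k A c) (Ψ a),
            LinearMap.map_smul]
          rw [show algebraMap A (ResidueField A) (algebraMap k A c) =
            algebraMap k (ResidueField A) c from rfl, algebraMap_smul] }
    let Dφ : Derivation k A (ResidueField A) :=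
      { toLinearMap := Dl
        map_one_eq_zero' := by
          show φ (Ψ 1) = 0
          have h0 : (⟨_, hmem 1⟩ : (maximalIdeal A).cotangentIdeal) = 0 := by
            refine Subtype.ext ?_
            show Ideal.Quotient.mk (maximalIdeal A ^ 2) 1 - σ (residue A 1) = 0
            rw [map_one, map_one, map_one, sub_self]
          show φ ((maximalIdeal A).cotangentEquivIdeal.symm _) = 0
          rw [h0, map_zero, map_zero]
        leibniz' := by
          intro a b
          show φ (Ψ (a * b)) = a • φ (Ψ b) + b • φ (Ψ a)
          rw [hψmul, map_add, ← algebraMap_smul (ResidueField A) a (Ψ b),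
            ← algebraMap_smul (ResidueField A) b (Ψ a), LinearMap.map_smul, LinearMap.map_smul,
            algebraMap_smul, algebraMap_smul] }
    refine ⟨Dφ, ?_⟩
    apply LinearMap.ext; intro x
    obtain ⟨m, rfl⟩ := Ideal.toCotangent_surjective (maximalIdeal A) x
    show phiAux _ ((maximalIdeal A).toCotangent m) = φ ((maximalIdeal A).toCotangent m)
    rw [phiAux_toCotangent]
    show φ (Ψ (m : A)) = φ ((maximalIdeal A).toCotangent m)
    congr 1
    have h1 : Ideal.Quotient.mk (maximalIdeal A ^ 2) (0 : A) = σ (residue A (m : A)) := by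
      rw [map_zero, show residue A (m : A) = 0 from Ideal.Quotient.eq_zero_iff_mem.2 m.2,
        map_zero]
    have h2 := hψ (m : A) 0 h1 (by simp only [sub_zero]; exact m.2)
    rw [h2]
    congr 1
    exact Subtype.ext (sub_zero _)
end

section
/- Let f : X → S be a morphism of schemes, x a point of X lying over s = f(x), and suppose the residue field extension κ(x)/κ(s) is algebraic and separable. Then the canonical κ(x)-linear map from the Grothendieck relative tangent space Der_{O_{S,s}}(O_{X,x}, κ(x)) to the Zariski relative tangent space T^Zar_{X/S}(x) — sending a derivation D to the map it induces on 𝔪_x/𝔪_x² — is bijective. -/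
open IsLocalRing AlgebraicGeometry

section Phi
variable {R A : Type*} [CommRing R] [CommRing A] [IsLocalRing R] [IsLocalRing A]
  [Algebra R A] [IsLocalHom (algebraMap R A)]

lemma res_smul (a : A) (z : ResidueField A) : a • z = residue A a * z := Algebra.smul_def a z

/-- `D` restricted to the maximal ideal, as an `A`-linear map. -/
noncomputable def ellAux (D : Derivation R A (ResidueField A)) : (maximalIdeal A) →ₗ[A] ResidueField A where
  toFun m := D m
  map_add' m n := by simp
  map_smul' a m := by
    simp only [SetLike.val_smul, smul_eq_mul, Derivation.leibniz, RingHom.id_apply]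
    rw [res_smul (m : A), show residue A (m:A) = 0 from Ideal.Quotient.eq_zero_iff_mem.mpr m.2,
      zero_mul, add_zero]

@[simp] lemma ellAux_apply (D : Derivation R A (ResidueField A)) (m : maximalIdeal A) :
    ellAux D m = D m := rfl

/-- The induced `A`-linear map on the cotangent space. -/
noncomputable def ellA (D : Derivation R A (ResidueField A)) :
    (maximalIdeal A).Cotangent →ₗ[A] ResidueField A := by
  delta Ideal.Cotangent
  exact Submodule.liftQ _ (ellAux D) (Submodule.smul_le.mpr (by
    intro r hr n _
    rw [LinearMap.mem_ker, map_smul, ellAux_apply, res_smul,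
      show residue A r = 0 from Ideal.Quotient.eq_zero_iff_mem.mpr hr, zero_mul]))

@[simp] lemma ellA_toCotangent (D : Derivation R A (ResidueField A)) (m : maximalIdeal A) :
    ellA D ((maximalIdeal A).toCotangent m) = D m := rfl

/-- The induced `κ(A)`-linear map on the cotangent space. -/
noncomputable def ellκ (D : Derivation R A (ResidueField A)) :
    (maximalIdeal A).Cotangent →ₗ[ResidueField A] ResidueField A :=
  (ellA D).extendScalarsOfSurjective Ideal.Quotient.mk_surjective

@[simp] lemma ellκ_toCotangent (D : Derivation R A (ResidueField A)) (m : maximalIdeal A) :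
    ellκ D ((maximalIdeal A).toCotangent m) = D m := rfl

lemma ellκ_mem_TZar (D : Derivation R A (ResidueField A)) : ellκ D ∈ TZar R A := by
  rw [TZar, Submodule.mem_iInf]
  intro r
  rw [LinearMap.mem_ker]
  show ellκ D (jClass R A r) = 0
  rw [jClass, ellκ_toCotangent]
  exact D.map_algebraMap r

variable (R A) in
/-- The canonical map from the Grothendieck tangent space to the Zariski tangent space. -/
noncomputable def PhiMap :
    Derivation R A (ResidueField A) →ₗ[ResidueField A] TZar R A where
  toFun D := ⟨ellκ D, ellκ_mem_TZar D⟩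
  map_add' D E := by
    apply Subtype.ext
    apply LinearMap.ext
    intro c
    obtain ⟨m, rfl⟩ := (maximalIdeal A).toCotangent_surjective c
    simp [ellκ_toCotangent]
  map_smul' c D := by
    apply Subtype.ext
    apply LinearMap.ext
    intro cc
    obtain ⟨m, rfl⟩ := (maximalIdeal A).toCotangent_surjective cc
    simp [ellκ_toCotangent]

@[simp] lemma PhiMap_apply (D : Derivation R A (ResidueField A)) (m : maximalIdeal A) :
    ((PhiMap R A D : (maximalIdeal A).Cotangent →ₗ[ResidueField A] ResidueField A))
      ((maximalIdeal A).toCotangent m) = D m := rfl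

end Phi


section Inj
universe u
lemma res_smul' {A : Type*} [CommRing A] [IsLocalRing A] (a : A) (z : ResidueField A) :
    a • z = residue A a * z := Algebra.smul_def a z

variable {R A : Type u} [CommRing R] [CommRing A] [IsLocalRing R] [IsLocalRing A]
  [Algebra R A] [IsLocalHom (algebraMap R A)]
  [Algebra.IsSeparable (ResidueField R) (ResidueField A)]

lemma derivation_eq_zero_of_vanish (D : Derivation R A (ResidueField A))
    (h : ∀ m : maximalIdeal A, D m = 0) : D = 0 := by
  classical
  have hsur : Function.Surjective (residue A) := Ideal.Quotient.mk_surjective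
  set t : ResidueField A → ResidueField A := fun x => D (Function.surjInv hsur x) with ht
  have hres : ∀ x, residue A (Function.surjInv hsur x) = x := fun x => Function.surjInv_eq hsur x
  have key : ∀ a : A, D a = t (residue A a) := by
    intro a
    have hm : a - Function.surjInv hsur (residue A a) ∈ maximalIdeal A := by
      rw [← Ideal.Quotient.eq_zero_iff_mem]
      show residue A _ = 0
      rw [map_sub, hres, sub_self]
    have := h ⟨_, hm⟩
    simp only [map_sub] at this
    have : D a - D (Function.surjInv hsur (residue A a)) = 0 := this
    rw [sub_eq_zero] at this
    exact this
  have hsurR : Function.Surjective (residue R) := Ideal.Quotient.mk_surjective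
  let τ : Derivation (ResidueField R) (ResidueField A) (ResidueField A) :=
  { toFun := t
    map_add' := fun x y => by
      obtain ⟨a, rfl⟩ := hsur x
      obtain ⟨b, rfl⟩ := hsur y
      rw [← map_add, ← key, ← key, ← key, map_add]
    map_smul' := fun c x => by
      obtain ⟨r, rfl⟩ := hsurR c
      obtain ⟨a, rfl⟩ := hsur x
      have hc : residue R r • residue A a = residue A (algebraMap R A r * a) := by
        rw [Algebra.smul_def, map_mul]
        exact congrArg (· * residue A a) (ResidueField.map_residue (algebraMap R A) r)
      show t _ = residue R r • t _
      rw [hc, ← key, Derivation.leibniz, D.map_algebraMap,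
        res_smul' a 0, mul_zero, add_zero, res_smul', ← key,
        Algebra.smul_def, ← ResidueField.map_residue (algebraMap R A) r]
      rfl
    map_one_eq_zero' := by
      show t 1 = 0
      rw [show (1 : ResidueField A) = residue A 1 from (map_one _).symm, ← key, Derivation.map_one_eq_zero]
    leibniz' := fun x y => by
      obtain ⟨a, rfl⟩ := hsur x
      obtain ⟨b, rfl⟩ := hsur y
      show t _ = _
      rw [← map_mul, ← key, Derivation.leibniz, res_smul' a (D b), res_smul' b (D a)]
      show _ = residue A a • t (residue A b) + residue A b • t (residue A a)
      rw [← key, ← key, smul_eq_mul, smul_eq_mul] }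
  haveI : Algebra.FormallyEtale (ResidueField R) (ResidueField A) :=
    Algebra.FormallyEtale.of_isSeparable _ _
  haveI : Algebra.FormallyUnramified (ResidueField R) (ResidueField A) :=
    inferInstance
  have hτ : ∀ x, τ x = 0 := by
    intro x
    rw [← Derivation.liftKaehlerDifferential_comp_D τ x,
      Subsingleton.elim (KaehlerDifferential.D _ _ x) 0, map_zero]
  ext a
  rw [show D a = t (residue A a) from key a]
  exact hτ (residue A a)

end Inj

section Surj
universe u
variable (R A : Type u) [CommRing R] [CommRing A] [IsLocalRing R] [IsLocalRing A]
  [Algebra R A] [IsLocalHom (algebraMap R A)]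

/-- The ideal `𝔪_A² + 𝔪_R A`. -/
noncomputable def Jdl : Ideal A := maximalIdeal A ^ 2 ⊔ (maximalIdeal R).map (algebraMap R A)

lemma Jdl_le : Jdl R A ≤ maximalIdeal A :=
  sup_le (Ideal.pow_le_self two_ne_zero)
    (Ideal.map_le_iff_le_comap.mpr fun r hr => (mapMax R A ⟨r, hr⟩).2)

/-- The ring map `κ(R) → A ⧸ (𝔪_A² + 𝔪_R A)`. -/
noncomputable def resToB : ResidueField R →+* A ⧸ Jdl R A :=
  Ideal.Quotient.lift (maximalIdeal R) ((Ideal.Quotient.mk (Jdl R A)).comp (algebraMap R A))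
    (fun r hr => by
      rw [RingHom.comp_apply, Ideal.Quotient.eq_zero_iff_mem]
      exact Submodule.mem_sup_right (Ideal.mem_map_of_mem _ hr))

lemma exists_derivation [Algebra.IsSeparable (ResidueField R) (ResidueField A)]
    (φ : (maximalIdeal A).Cotangent →ₗ[ResidueField A] ResidueField A)
    (hφ : φ ∈ TZar R A) :
    ∃ D : Derivation R A (ResidueField A),
      ∀ m : maximalIdeal A, φ ((maximalIdeal A).toCotangent m) = D m := by
  classical
  letI : Algebra (ResidueField R) (A ⧸ Jdl R A) := (resToB R A).toAlgebra
  have hg0 : ∀ a ∈ Jdl R A, residue A a = 0 := fun a ha =>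
    Ideal.Quotient.eq_zero_iff_mem.mpr (Jdl_le R A ha)
  set g0 : A ⧸ Jdl R A →+* ResidueField A :=
    Ideal.Quotient.lift (Jdl R A) (residue A) hg0 with hg0def
  have hg0mk : ∀ a : A, g0 (Ideal.Quotient.mk (Jdl R A) a) = residue A a := fun a =>
    Ideal.Quotient.lift_mk _ _ _
  let gB : (A ⧸ Jdl R A) →ₐ[ResidueField R] ResidueField A :=
  { toRingHom := g0
    commutes' := fun c => by
      obtain ⟨r, rfl⟩ := (Ideal.Quotient.mk_surjective : Function.Surjective (residue R)) c
      show g0 (resToB R A (residue R r)) = _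
      rw [show resToB R A (residue R r)
          = Ideal.Quotient.mk (Jdl R A) (algebraMap R A r) from Ideal.Quotient.lift_mk _ _ _,
        hg0mk]
      exact (ResidueField.map_residue (algebraMap R A) r).symm }
  have hgBmk : ∀ a : A, gB (Ideal.Quotient.mk (Jdl R A) a) = residue A a := hg0mk
  have hgsur : Function.Surjective gB := fun x => by
    obtain ⟨a, rfl⟩ := (Ideal.Quotient.mk_surjective : Function.Surjective (residue A)) x
    exact ⟨Ideal.Quotient.mk _ a, hgBmk a⟩
  have hker : IsNilpotent (RingHom.ker (gB : (A ⧸ Jdl R A) →+* ResidueField A)) := by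
    refine ⟨2, ?_⟩
    rw [pow_two, Ideal.zero_eq_bot, eq_bot_iff]
    refine Ideal.mul_le.mpr ?_
    intro x hx y hy
    obtain ⟨a, rfl⟩ := Ideal.Quotient.mk_surjective x
    obtain ⟨b, rfl⟩ := Ideal.Quotient.mk_surjective y
    have ha : a ∈ maximalIdeal A := by
      have : residue A a = 0 := by rw [← hgBmk a]; exact hx
      exact Ideal.Quotient.eq_zero_iff_mem.mp this
    have hb : b ∈ maximalIdeal A := by
      have : residue A b = 0 := by rw [← hgBmk b]; exact hy
      exact Ideal.Quotient.eq_zero_iff_mem.mp this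
    rw [← map_mul, Submodule.mem_bot, Ideal.Quotient.eq_zero_iff_mem]
    refine Submodule.mem_sup_left ?_
    rw [pow_two]
    exact Ideal.mul_mem_mul ha hb
  haveI : Algebra.FormallyEtale (ResidueField R) (ResidueField A) :=
    Algebra.FormallyEtale.of_isSeparable _ _
  set σ : ResidueField A →ₐ[ResidueField R] A ⧸ Jdl R A :=
    Algebra.FormallySmooth.liftOfSurjective (AlgHom.id _ _) gB hgsur hker with hσdef
  have hσ : ∀ x, gB (σ x) = x := fun x =>
    Algebra.FormallySmooth.liftOfSurjective_apply (AlgHom.id _ _) gB hgsur hker x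
  -- the functional on the maximal ideal
  set F : (maximalIdeal A) →ₗ[A] ResidueField A :=
    (φ.restrictScalars A).comp ((maximalIdeal A).toCotangent) with hFdef
  have hFm : ∀ m : maximalIdeal A, F m = φ ((maximalIdeal A).toCotangent m) := fun m => rfl
  have hF0 : ∀ (m : maximalIdeal A), (m : A) ∈ Jdl R A → F m = 0 := by
    have hK : Jdl R A ≤ Submodule.map (maximalIdeal A).subtype (LinearMap.ker F) := by
      rw [Jdl]
      refine sup_le ?_ ?_
      · intro a ha
        refine ⟨⟨a, Ideal.pow_le_self two_ne_zero ha⟩, ?_, rfl⟩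
        show F _ = 0
        rw [hFm,
          show (maximalIdeal A).toCotangent ⟨a, _⟩ = 0 from
            ((maximalIdeal A).toCotangent_eq_zero _).mpr ha, map_zero]
      · rw [Ideal.map_le_iff_le_comap]
        intro r hr
        refine ⟨mapMax R A ⟨r, hr⟩, ?_, rfl⟩
        show F _ = 0
        rw [hFm]
        have := (Submodule.mem_iInf _).mp hφ ⟨r, hr⟩
        exact LinearMap.mem_ker.mp this
    intro m hm
    obtain ⟨m', hm', he⟩ := hK hm
    rwa [show m' = m from Subtype.ext he] at hm'
  -- the set-theoretic section ρ : κ(A) → A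
  set ρ : ResidueField A → A :=
    fun x => Function.surjInv Ideal.Quotient.mk_surjective (σ x) with hρdef
  have hρJ : ∀ x, Ideal.Quotient.mk (Jdl R A) (ρ x) = σ x := fun x =>
    Function.surjInv_eq Ideal.Quotient.mk_surjective (σ x)
  have hρres : ∀ x, residue A (ρ x) = x := fun x => by
    have h1 : gB (Ideal.Quotient.mk (Jdl R A) (ρ x)) = residue A (ρ x) := hgBmk _
    rw [hρJ, hσ] at h1
    exact h1.symm
  have hmem : ∀ a : A, a - ρ (residue A a) ∈ maximalIdeal A := fun a => by
    rw [← Ideal.Quotient.eq_zero_iff_mem]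
    show residue A _ = 0
    rw [map_sub, hρres, sub_self]
  set Dfun : A → ResidueField A := fun a => F ⟨a - ρ (residue A a), hmem a⟩ with hDdef
  -- main computation lemma
  have main : ∀ (a c : A) (hc : Ideal.Quotient.mk (Jdl R A) c = σ (residue A a))
      (h𝔪 : a - c ∈ maximalIdeal A), Dfun a = F ⟨a - c, h𝔪⟩ := by
    intro a c hc h𝔪
    have hJ : ρ (residue A a) - c ∈ Jdl R A := by
      rw [← Ideal.Quotient.eq_zero_iff_mem, map_sub, hρJ, hc, sub_self]
    have hJ𝔪 : ρ (residue A a) - c ∈ maximalIdeal A := Jdl_le R A hJ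
    have hsplit : (⟨a - c, h𝔪⟩ : maximalIdeal A)
        = ⟨a - ρ (residue A a), hmem a⟩ + ⟨ρ (residue A a) - c, hJ𝔪⟩ := by
      apply Subtype.ext
      show a - c = (a - ρ (residue A a)) + (ρ (residue A a) - c)
      ring
    rw [hsplit, map_add, hF0 ⟨ρ (residue A a) - c, hJ𝔪⟩ hJ, add_zero]
  -- algebraMap elements
  have halg : ∀ r : R, Dfun (algebraMap R A r) = 0 := by
    intro r
    have hc : Ideal.Quotient.mk (Jdl R A) (algebraMap R A r)
        = σ (residue A (algebraMap R A r)) := by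
      rw [← ResidueField.map_residue (algebraMap R A) r]
      have h1 : σ (algebraMap (ResidueField R) (ResidueField A) (residue R r))
          = algebraMap (ResidueField R) (A ⧸ Jdl R A) (residue R r) := σ.commutes _
      have h2 : algebraMap (ResidueField R) (A ⧸ Jdl R A) (residue R r)
          = Ideal.Quotient.mk (Jdl R A) (algebraMap R A r) := Ideal.Quotient.lift_mk _ _ _
      exact (h1.trans h2).symm
    rw [main _ _ hc (by rw [sub_self]; exact zero_mem _)]
    rw [show (⟨_ - _, _⟩ : maximalIdeal A) = 0 from Subtype.ext (sub_self _), map_zero]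
  -- additivity
  have hadd : ∀ a b : A, Dfun (a + b) = Dfun a + Dfun b := by
    intro a b
    have hc : Ideal.Quotient.mk (Jdl R A) (ρ (residue A a) + ρ (residue A b))
        = σ (residue A (a + b)) := by
      rw [map_add, hρJ, hρJ, map_add, map_add]
    have h𝔪 : (a + b) - (ρ (residue A a) + ρ (residue A b)) ∈ maximalIdeal A := by
      have := add_mem (hmem a) (hmem b)
      convert this using 1
      ring
    rw [main _ _ hc h𝔪]
    have hsplit : (⟨(a + b) - (ρ (residue A a) + ρ (residue A b)), h𝔪⟩ : maximalIdeal A)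
        = ⟨a - ρ (residue A a), hmem a⟩ + ⟨b - ρ (residue A b), hmem b⟩ := by
      apply Subtype.ext
      show _ = (a - ρ (residue A a)) + (b - ρ (residue A b))
      ring
    rw [hsplit, map_add]
  -- Leibniz
  have hleib : ∀ a b : A, Dfun (a * b) = residue A a * Dfun b + residue A b * Dfun a := by
    intro a b
    have hc : Ideal.Quotient.mk (Jdl R A) (ρ (residue A a) * ρ (residue A b))
        = σ (residue A (a * b)) := by
      rw [map_mul, hρJ, hρJ, map_mul, map_mul]
    have h𝔪 : (a * b) - (ρ (residue A a) * ρ (residue A b)) ∈ maximalIdeal A := by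
      rw [← Ideal.Quotient.eq_zero_iff_mem]
      show residue A _ = 0
      rw [map_sub, map_mul, map_mul, hρres, hρres, sub_self]
    rw [main _ _ hc h𝔪]
    have hsplit : (⟨(a * b) - (ρ (residue A a) * ρ (residue A b)), h𝔪⟩ : maximalIdeal A)
        = a • (⟨b - ρ (residue A b), hmem b⟩ : maximalIdeal A)
          + (ρ (residue A b)) • (⟨a - ρ (residue A a), hmem a⟩ : maximalIdeal A) := by
      apply Subtype.ext
      show _ = a * (b - ρ (residue A b)) + ρ (residue A b) * (a - ρ (residue A a))
      ring
    rw [hsplit, map_add, map_smul, map_smul, res_smul', res_smul', hρres]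
  -- build the derivation
  set D : Derivation R A (ResidueField A) :=
  { toFun := Dfun
    map_add' := hadd
    map_smul' := fun r a => by
      show Dfun (r • a) = r • Dfun a
      rw [Algebra.smul_def, hleib, halg, mul_zero, add_zero, Algebra.smul_def,
        show algebraMap R (ResidueField A) r = residue A (algebraMap R A r) from
          ResidueField.map_residue (algebraMap R A) r]
    map_one_eq_zero' := by
      have := halg 1
      rwa [map_one] at this
    leibniz' := fun a b => by
      show Dfun (a * b) = a • Dfun b + b • Dfun a
      rw [hleib, res_smul', res_smul'] } with hDdef'
  refine ⟨D, fun m => ?_⟩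
  have hc : Ideal.Quotient.mk (Jdl R A) (0 : A) = σ (residue A (m : A)) := by
    rw [show residue A (m : A) = 0 from Ideal.Quotient.eq_zero_iff_mem.mpr m.2,
      map_zero, map_zero]
  have h𝔪 : (m : A) - 0 ∈ maximalIdeal A := by rw [sub_zero]; exact m.2
  have : D m = F ⟨(m : A) - 0, h𝔪⟩ := main _ _ hc h𝔪
  rw [this, show (⟨(m : A) - 0, h𝔪⟩ : maximalIdeal A) = m from Subtype.ext (sub_zero _), hFm]

end Surj



section Main
universe u
variable (R A : Type u) [CommRing R] [CommRing A] [IsLocalRing R] [IsLocalRing A]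
  [Algebra R A] [IsLocalHom (algebraMap R A)]
  [Algebra.IsSeparable (ResidueField R) (ResidueField A)]

theorem main_bij :
    ∃ Φ : Derivation R A (ResidueField A) →ₗ[ResidueField A] TZar R A,
      (∀ (D : Derivation R A (ResidueField A)) (m : maximalIdeal A),
        ((Φ D : (maximalIdeal A).Cotangent →ₗ[ResidueField A] ResidueField A))
          ((maximalIdeal A).toCotangent m) = D m) ∧
      Function.Bijective Φ := by
  refine ⟨PhiMap R A, fun D m => rfl, ?_, ?_⟩
  · rw [injective_iff_map_eq_zero]
    intro D h
    refine derivation_eq_zero_of_vanish D (fun m => ?_)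
    have h2 := congrArg (fun ψ : TZar R A =>
      ((ψ : (maximalIdeal A).Cotangent →ₗ[ResidueField A] ResidueField A))
        ((maximalIdeal A).toCotangent m)) h
    simpa using h2
  · intro ψ
    obtain ⟨D, hD⟩ := exists_derivation R A ψ.1 ψ.2
    refine ⟨D, Subtype.ext (LinearMap.ext fun c => ?_)⟩
    obtain ⟨m, rfl⟩ := (maximalIdeal A).toCotangent_surjective c
    exact (hD m).symm

end Main

set_option synthInstance.maxHeartbeats 1000000 in
set_option maxHeartbeats 1000000 in
/-- Let `f : X → S` be a morphism of schemes, `x` a point of `X` lying over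
`s = f(x)`, and suppose the residue field extension `κ(x)/κ(s)` (induced by the stalk map
`f^♯ : O_{S,s} → O_{X,x}`, a local homomorphism) is algebraic and separable.  Then the
canonical `κ(x)`-linear map from the Grothendieck relative tangent space
`Der_{O_{S,s}}(O_{X,x}, κ(x))` to the Zariski relative tangent space `T^Zar_{X/S}(x)` —
sending a derivation `D` to the map it induces on `𝔪_x/𝔪_x²` — is bijective.  (The
`O_{S,s}`-algebra structure on `O_{X,x}` is required to be the one given by the stalk map.) -/
theorem stmt_15 {X S : Scheme} (f : X ⟶ S) (x : X)
    [Algebra ↑(S.presheaf.stalk (f.base x)) ↑(X.presheaf.stalk x)]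
    (halg : algebraMap ↑(S.presheaf.stalk (f.base x)) ↑(X.presheaf.stalk x) = (f.stalkMap x).hom)
    [IsLocalHom (algebraMap ↑(S.presheaf.stalk (f.base x)) ↑(X.presheaf.stalk x))]
    [Algebra.IsAlgebraic (ResidueField ↑(S.presheaf.stalk (f.base x)))
      (ResidueField ↑(X.presheaf.stalk x))]
    [Algebra.IsSeparable (ResidueField ↑(S.presheaf.stalk (f.base x)))
      (ResidueField ↑(X.presheaf.stalk x))] :
    ∃ Φ : Derivation ↑(S.presheaf.stalk (f.base x)) ↑(X.presheaf.stalk x)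
          (ResidueField ↑(X.presheaf.stalk x)) →ₗ[ResidueField ↑(X.presheaf.stalk x)]
        TZar ↑(S.presheaf.stalk (f.base x)) ↑(X.presheaf.stalk x),
      (∀ (D : Derivation ↑(S.presheaf.stalk (f.base x)) ↑(X.presheaf.stalk x)
          (ResidueField ↑(X.presheaf.stalk x)))
         (m : maximalIdeal ↑(X.presheaf.stalk x)),
        ((Φ D : (maximalIdeal ↑(X.presheaf.stalk x)).Cotangent
            →ₗ[ResidueField ↑(X.presheaf.stalk x)] ResidueField ↑(X.presheaf.stalk x)))
          ((maximalIdeal ↑(X.presheaf.stalk x)).toCotangent m) = D m) ∧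
      Function.Bijective Φ := by
  exact main_bij _ _
end
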